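/- Let G = (V, E) be an undirected graph on a finite vertex set V. Let π : V → ℝ be a function with π(i) > 0 for every i ∈ V and Σ_{i∈V} π(i) = 1. Then Σ_{i∈V} π(i) / (π(i) + Σ_{j : j adjacent to i} π(j)) ≤ α(G), where α(G) is the independence number of G. -/

import Mathlib

open Finset

/-- `s` is an independent set of the simple graph `G`: no two distinct vertices of `s`
are adjacent. -/
def IsIndepSet {V : Type*} (G : SimpleGraph V) (s : Finset V) : Prop :=
  ∀ i ∈ s, ∀ j ∈ s, i ≠ j → ¬ G.Adj i j

/-- The independence number of `G`: the maximum cardinality of an independent set. -/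
noncomputable def indepNum (V : Type*) [Fintype V] (G : SimpleGraph V) : ℕ :=
  sSup {n | ∃ s : Finset V, IsIndepSet G s ∧ s.card = n}

private lemma caro_wei_aux {V : Type*} [DecidableEq V] (G : SimpleGraph V) [DecidableRel G.Adj]
    (π : V → ℝ) (hpos : ∀ i, 0 < π i) (s : Finset V) :
    ∃ t : Finset V, t ⊆ s ∧ IsIndepSet G t ∧
      ∑ i ∈ s, π i / (π i + ∑ j ∈ s.filter (fun j => G.Adj j i), π j) ≤ (t.card : ℝ) := by
  induction s using Finset.strongInduction with
  | _ s ih =>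
    rcases s.eq_empty_or_nonempty with rfl | hs
    · exact ⟨∅, by simp, by simp [IsIndepSet], by simp⟩
    · set W : V → ℝ := fun u => ∑ j ∈ s.filter (fun j => j = u ∨ G.Adj j u), π j with hW
      obtain ⟨v, hv, hvmin⟩ := s.exists_min_image W hs
      set N := s.filter (fun j => j = v ∨ G.Adj j v) with hN
      have hvN : v ∈ N := mem_filter.mpr ⟨hv, Or.inl rfl⟩
      have hNs : N ⊆ s := filter_subset _ _
      have hss : s \ N ⊂ s := by
        refine Finset.sdiff_ssubset ?_ ⟨v, hvN⟩
        exact hNs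
      obtain ⟨u, hu_sub, hu_ind, hu_sum⟩ := ih (s \ N) hss
      have hvu : v ∉ u := fun h => (mem_sdiff.mp (hu_sub h)).2 hvN
      have husub' : u ⊆ s := hu_sub.trans (sdiff_subset)
      -- key identity
      have key : ∀ i ∈ s, π i + ∑ j ∈ s.filter (fun j => G.Adj j i), π j = W i := by
        intro i hi
        have hfe : s.filter (fun j => j = i ∨ G.Adj j i)
            = insert i (s.filter (fun j => G.Adj j i)) := by
          ext j
          simp only [mem_filter, mem_insert]
          constructor
          · rintro ⟨hjs, rfl | h⟩
            · exact Or.inl rfl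
            · exact Or.inr ⟨hjs, h⟩
          · rintro (rfl | ⟨hjs, h⟩)
            · exact ⟨hi, Or.inl rfl⟩
            · exact ⟨hjs, Or.inr h⟩
        have hnotmem : i ∉ s.filter (fun j => G.Adj j i) := by
          simp [G.irrefl]
        rw [hW]
        simp only
        rw [hfe, sum_insert hnotmem]
      have hWvpos : 0 < W v := by
        refine Finset.sum_pos (fun j _ => hpos j) ⟨v, hvN⟩
      -- part 1: sum over N ≤ 1
      have part1 : ∑ i ∈ N, π i / (π i + ∑ j ∈ s.filter (fun j => G.Adj j i), π j) ≤ 1 := by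
        have h1 : ∀ i ∈ N, π i / (π i + ∑ j ∈ s.filter (fun j => G.Adj j i), π j)
            ≤ π i / W v := by
          intro i hi
          rw [key i (hNs hi)]
          exact div_le_div_of_nonneg_left (hpos i).le hWvpos (hvmin i (hNs hi))
        calc ∑ i ∈ N, π i / (π i + ∑ j ∈ s.filter (fun j => G.Adj j i), π j)
            ≤ ∑ i ∈ N, π i / W v := sum_le_sum h1
          _ = (∑ i ∈ N, π i) / W v := by rw [sum_div]
          _ = 1 := by
              rw [div_eq_one_iff_eq hWvpos.ne']
      -- part 2
      have part2 : ∑ i ∈ s \ N, π i / (π i + ∑ j ∈ s.filter (fun j => G.Adj j i), π j)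
          ≤ ∑ i ∈ s \ N, π i / (π i + ∑ j ∈ (s \ N).filter (fun j => G.Adj j i), π j) := by
        refine sum_le_sum fun i hi => ?_
        have hsub : (s \ N).filter (fun j => G.Adj j i) ⊆ s.filter (fun j => G.Adj j i) :=
          filter_subset_filter _ sdiff_subset
        have hle : ∑ j ∈ (s \ N).filter (fun j => G.Adj j i), π j
            ≤ ∑ j ∈ s.filter (fun j => G.Adj j i), π j :=
          sum_le_sum_of_subset_of_nonneg hsub (fun j _ _ => (hpos j).le)
        have hden : 0 < π i + ∑ j ∈ (s \ N).filter (fun j => G.Adj j i), π j := by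
          have : 0 ≤ ∑ j ∈ (s \ N).filter (fun j => G.Adj j i), π j :=
            sum_nonneg fun j _ => (hpos j).le
          linarith [hpos i]
        exact div_le_div_of_nonneg_left (hpos i).le hden (by linarith)
      refine ⟨insert v u, ?_, ?_, ?_⟩
      · intro x hx
        rcases mem_insert.mp hx with rfl | hx
        · exact hv
        · exact husub' hx
      · intro i hi j hj hij
        rcases mem_insert.mp hi with hiv | hiu <;> rcases mem_insert.mp hj with hjv | hju
        · exact absurd (hiv.trans hjv.symm) hij
        · subst hiv
          intro hadj
          have hjN : j ∈ N := mem_filter.mpr ⟨husub' hju, Or.inr (G.adj_symm hadj)⟩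
          exact (mem_sdiff.mp (hu_sub hju)).2 hjN
        · subst hjv
          intro hadj
          have hiN : i ∈ N := mem_filter.mpr ⟨husub' hiu, Or.inr hadj⟩
          exact (mem_sdiff.mp (hu_sub hiu)).2 hiN
        · exact hu_ind i hiu j hju hij
      · have hsplit : ∑ i ∈ s, π i / (π i + ∑ j ∈ s.filter (fun j => G.Adj j i), π j)
            = ∑ i ∈ s \ N, π i / (π i + ∑ j ∈ s.filter (fun j => G.Adj j i), π j)
            + ∑ i ∈ N, π i / (π i + ∑ j ∈ s.filter (fun j => G.Adj j i), π j) :=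
          (sum_sdiff hNs).symm
        rw [hsplit, card_insert_of_notMem hvu]
        push_cast
        linarith [part1, part2.trans hu_sum]

theorem stmt0 {V : Type*} [Fintype V] (G : SimpleGraph V) [DecidableRel G.Adj]
    (π : V → ℝ) (hpos : ∀ i, 0 < π i) (hsum : ∑ i, π i = 1) :
    ∑ i, π i / (π i + ∑ j ∈ univ.filter (fun j => G.Adj j i), π j)
      ≤ (indepNum V G : ℝ) := by
  classical
  obtain ⟨t, -, hind, hle⟩ := caro_wei_aux G π hpos univ
  refine hle.trans ?_
  have hmem : t.card ∈ {n | ∃ s : Finset V, IsIndepSet G s ∧ s.card = n} := ⟨t, hind, rfl⟩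
  have hbdd : BddAbove {n | ∃ s : Finset V, IsIndepSet G s ∧ s.card = n} := by
    refine ⟨Fintype.card V, ?_⟩
    rintro n ⟨s, -, rfl⟩
    exact s.card_le_univ
  exact_mod_cast le_csSup hbdd hmem
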